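/- Let a ≥ 0, α > 0, and c, c₁, c₂ ≥ 0 be real numbers satisfying 4 · (a c₁/α³ + 2 a² c₂/α⁵) · exp(4 c a²/α⁴) < 1. Let T ∈ (0,∞] and let y : [0,T) → ℝ be a differentiable function with y(0) = 0, y(t) ≥ 0 for all t ∈ [0,T), and y'(t) ≤ a · exp( α t (c₁ y(t) + c₂ y(t)²) e^{c y(t)²} − α² t ) for all t ∈ [0,T). Then for every t ∈ [0,T): y(t) ≤ 2a/α² and y'(t) ≤ a · e^{−α² t / 2}. -/

import Mathlib

open scoped ENNReal

/-- solutions of the one-dimensional differential inequality stay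
bounded under the smallness condition on the constants. -/
theorem statement5
    (a α c c₁ c₂ : ℝ) (ha : 0 ≤ a) (hα : 0 < α) (hc : 0 ≤ c) (hc₁ : 0 ≤ c₁) (hc₂ : 0 ≤ c₂)
    (hcond : 4 * (a * c₁ / α ^ 3 + 2 * a ^ 2 * c₂ / α ^ 5) *
        Real.exp (4 * c * a ^ 2 / α ^ 4) < 1)
    (T : ℝ≥0∞) (hT : 0 < T)
    (y y' : ℝ → ℝ)
    (hderiv : ∀ t : ℝ, 0 ≤ t → ENNReal.ofReal t < T →
      HasDerivWithinAt y (y' t) (Set.Ici 0) t)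
    (hy0 : y 0 = 0)
    (hynn : ∀ t : ℝ, 0 ≤ t → ENNReal.ofReal t < T → 0 ≤ y t)
    (hbound : ∀ t : ℝ, 0 ≤ t → ENNReal.ofReal t < T →
      y' t ≤ a * Real.exp (α * t * (c₁ * y t + c₂ * y t ^ 2) *
          Real.exp (c * y t ^ 2) - α ^ 2 * t)) :
    ∀ t : ℝ, 0 ≤ t → ENNReal.ofReal t < T →
      y t ≤ 2 * a / α ^ 2 ∧ y' t ≤ a * Real.exp (-α ^ 2 * t / 2) := by
  intro t ht0 htT
  -- notation
  obtain ⟨Bc, hBc⟩ : ∃ Bc : ℝ, Bc = 2 * a / α ^ 2 := ⟨_, rfl⟩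
  have hBc0 : 0 ≤ Bc := by rw [hBc]; positivity
  obtain ⟨K, hKdef⟩ : ∃ K : ℝ, K = α * (c₁ * Bc + c₂ * Bc ^ 2) * Real.exp (c * Bc ^ 2) :=
    ⟨_, rfl⟩
  have hK0 : 0 ≤ K := by rw [hKdef, hBc]; positivity
  have hα2 : (0:ℝ) < α ^ 2 := by positivity
  -- K < α^2 / 2
  have hexp_eq : c * Bc ^ 2 = 4 * c * a ^ 2 / α ^ 4 := by
    rw [hBc]; field_simp; ring
  have hKlt : K < α ^ 2 / 2 := by
    have h2 : 2 * K / α ^ 2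
        = 4 * (a * c₁ / α ^ 3 + 2 * a ^ 2 * c₂ / α ^ 5) *
          Real.exp (4 * c * a ^ 2 / α ^ 4) := by
      rw [hKdef, hexp_eq, hBc]; field_simp; ring
    have h3 : 2 * K / α ^ 2 < 1 := by rw [h2]; exact hcond
    have := (div_lt_one hα2).mp h3
    linarith
  -- monotonicity of the exponent
  have hmono : ∀ s u : ℝ, 0 ≤ s → 0 ≤ u → u ≤ Bc →
      α * s * (c₁ * u + c₂ * u ^ 2) * Real.exp (c * u ^ 2) ≤ K * s := by
    intro s u hs hu0 huB
    have h1 : α * s * (c₁ * u + c₂ * u ^ 2) * Real.exp (c * u ^ 2)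
        ≤ α * s * (c₁ * Bc + c₂ * Bc ^ 2) * Real.exp (c * Bc ^ 2) := by
      gcongr <;> positivity
    calc α * s * (c₁ * u + c₂ * u ^ 2) * Real.exp (c * u ^ 2)
        ≤ α * s * (c₁ * Bc + c₂ * Bc ^ 2) * Real.exp (c * Bc ^ 2) := h1
      _ = K * s := by rw [hKdef]; ring
  -- membership helpers
  have hmemT : ∀ s : ℝ, s ∈ Set.Icc 0 t → ENNReal.ofReal s < T := fun s hs =>
    lt_of_le_of_lt (ENNReal.ofReal_le_ofReal hs.2) htT
  have hcont : ContinuousOn y (Set.Icc 0 t) := fun s hs =>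
    ((hderiv s hs.1 (hmemT s hs)).continuousWithinAt).mono (fun x hx => hx.1)
  have hderiv' : ∀ s ∈ Set.Ico 0 t, HasDerivWithinAt y (y' s) (Set.Ici s) s := by
    intro s hs
    exact (hderiv s hs.1 (hmemT s ⟨hs.1, hs.2.le⟩)).mono (Set.Ici_subset_Ici.2 hs.1)
  -- main claim : y ≤ Bc on [0, t]
  have hmain : ∀ s ∈ Set.Icc (0:ℝ) t, y s ≤ Bc := by
    rcases eq_or_lt_of_le ha with ha0 | hapos
    · -- a = 0 : compare with constant 0
      have hzero : ∀ s ∈ Set.Icc (0:ℝ) t, y s ≤ 0 := by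
        apply image_le_of_deriv_right_le_deriv_boundary hcont hderiv'
          (by rw [hy0]) (continuousOn_const (c := (0:ℝ)))
          (fun x _ => (hasDerivWithinAt_const x _ (0:ℝ)))
        intro x hx
        have := hbound x hx.1 (hmemT x ⟨hx.1, hx.2.le⟩)
        rw [← ha0] at this
        simpa using this
      intro s hs
      exact le_trans (hzero s hs) hBc0
    · -- a > 0 : compare with B s = Bc * (1 - exp (-β s)), β = α² - K
      obtain ⟨β, hβ⟩ : ∃ β : ℝ, β = α ^ 2 - K := ⟨_, rfl⟩
      have hβpos : α ^ 2 / 2 < β := by rw [hβ]; linarith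
      have hβ0 : 0 < β := by linarith
      have hB' : ∀ s : ℝ, HasDerivAt (fun u => Bc * (1 - Real.exp (-β * u)))
          (Bc * (β * Real.exp (-β * s))) s := by
        intro s
        have h1 : HasDerivAt (fun u : ℝ => -β * u) (-β) s := by
          simpa using (hasDerivAt_id s).const_mul (-β)
        have h2 := ((h1.exp).const_sub 1).const_mul Bc
        refine h2.congr_deriv ?_; ring
      have key : ∀ s ∈ Set.Icc (0:ℝ) t, y s ≤ Bc * (1 - Real.exp (-β * s)) := by
        apply image_le_of_deriv_right_lt_deriv_boundary' hcont hderiv'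
          (by rw [hy0]; simp)
          (Continuous.continuousOn (by fun_prop))
          (fun x _ => (hB' x).hasDerivWithinAt)
        intro x hx hxeq
        have hxT := hmemT x ⟨hx.1, hx.2.le⟩
        have hyx0 : 0 ≤ y x := hynn x hx.1 hxT
        have hyxB : y x ≤ Bc := by
          rw [hxeq]
          nlinarith [mul_nonneg hBc0 (Real.exp_pos (-β * x)).le]
        have h1 := hbound x hx.1 hxT
        have h2 : α * x * (c₁ * y x + c₂ * y x ^ 2) * Real.exp (c * y x ^ 2)
            - α ^ 2 * x ≤ -β * x := by
          have := hmono x (y x) hx.1 hyx0 hyxB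
          rw [hβ]; linarith
        have h3 : y' x ≤ a * Real.exp (-β * x) :=
          le_trans h1 (mul_le_mul_of_nonneg_left (Real.exp_le_exp.mpr h2) ha)
        have h4 : a * Real.exp (-β * x) < Bc * (β * Real.exp (-β * x)) := by
          have hBcβ : a < Bc * β := by
            rw [hBc, div_mul_eq_mul_div, lt_div_iff₀ hα2]
            nlinarith [hβpos, hapos]
          have hep : 0 < Real.exp (-β * x) := Real.exp_pos _
          calc a * Real.exp (-β * x) < (Bc * β) * Real.exp (-β * x) := by
                exact mul_lt_mul_of_pos_right hBcβ hep
            _ = Bc * (β * Real.exp (-β * x)) := by ring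
        exact lt_of_le_of_lt h3 h4
      intro s hs
      have h5 := key s hs
      nlinarith [mul_nonneg hBc0 (Real.exp_pos (-β * s)).le]
  -- conclude
  have hyt : y t ≤ Bc := hmain t ⟨ht0, le_refl t⟩
  refine ⟨by rw [← hBc]; exact hyt, ?_⟩
  have h1 := hbound t ht0 htT
  have h2 : α * t * (c₁ * y t + c₂ * y t ^ 2) * Real.exp (c * y t ^ 2)
      - α ^ 2 * t ≤ -α ^ 2 * t / 2 := by
    have h6 := hmono t (y t) ht0 (hynn t ht0 htT) hyt
    have h7 : K * t ≤ α ^ 2 / 2 * t := mul_le_mul_of_nonneg_right hKlt.le ht0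
    linarith
  exact le_trans h1 (mul_le_mul_of_nonneg_left (Real.exp_le_exp.mpr h2) ha)
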